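/- For X ∼ Binomial(n, p) and 0 ≤ k ≤ n, Pr[X ≤ k] ≥ (1/√(2n)) · exp(−n · KL(k/n ∥ p)), where KL(q₁ ∥ q₂) = q₁ log(q₁/q₂) + (1−q₁) log((1−q₁)/(1−q₂)). -/

import Mathlib

section BinomialLowerTail
open Real Finset Stirling Nat

lemma sqrtpi_le_stirlingSeq {n : ℕ} (hn : 1 ≤ n) : Real.sqrt π ≤ stirlingSeq n := by
  refine le_of_tendsto tendsto_stirlingSeq_sqrt_pi ?_
  filter_upwards [Filter.eventually_ge_atTop n] with m hm
  obtain ⟨n', rfl⟩ : ∃ n', n = n' + 1 := ⟨n - 1, by omega⟩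
  obtain ⟨m', rfl⟩ : ∃ m', m = m' + 1 := ⟨m - 1, by omega⟩
  exact stirlingSeq'_antitone (by omega)

lemma stirlingSeq_le {j n : ℕ} (hj : 1 ≤ j) (hjn : j ≤ n) : stirlingSeq n ≤ stirlingSeq j := by
  obtain ⟨j', rfl⟩ : ∃ j', j = j' + 1 := ⟨j - 1, by omega⟩
  obtain ⟨n', rfl⟩ : ∃ n', n = n' + 1 := ⟨n - 1, by omega⟩
  exact stirlingSeq'_antitone (by omega)

lemma stirlingSeq_two' : stirlingSeq 2 = Real.exp 1 ^ 2 / 4 := by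
  have h4 : Real.sqrt (2 * (2:ℕ)) = 2 := by
    rw [show (2 * (2:ℕ) : ℝ) = 2 ^ 2 by norm_num, Real.sqrt_sq (by norm_num)]
  rw [stirlingSeq, h4]
  have : (Nat.factorial 2 : ℝ) = 2 := by norm_num [Nat.factorial]
  rw [this]
  have he := Real.exp_pos 1
  field_simp
  ring

lemma fact_ge {n : ℕ} (hn : 1 ≤ n) :
    Real.sqrt π * (Real.sqrt (2 * n) * ((n : ℝ) / Real.exp 1) ^ n) ≤ n ! := by
  have h := sqrtpi_le_stirlingSeq hn
  have hn0 : (0:ℝ) < n := by exact_mod_cast hn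
  have hpos : 0 < Real.sqrt (2 * (n:ℝ)) * ((n : ℝ) / Real.exp 1) ^ n := by positivity
  have heq : stirlingSeq n * (Real.sqrt (2 * n) * ((n : ℝ) / Real.exp 1) ^ n) = n ! := by
    rw [stirlingSeq]
    field_simp
  calc Real.sqrt π * (Real.sqrt (2 * n) * ((n : ℝ) / Real.exp 1) ^ n)
      ≤ stirlingSeq n * (Real.sqrt (2 * n) * ((n : ℝ) / Real.exp 1) ^ n) := by
        exact mul_le_mul_of_nonneg_right h hpos.le
    _ = n ! := heq

lemma fact_le {k : ℕ} (hk : 2 ≤ k) :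
    (k ! : ℝ) ≤ (Real.exp 1 ^ 2 / 4) * (Real.sqrt (2 * k) * ((k : ℝ) / Real.exp 1) ^ k) := by
  have h := stirlingSeq_le (by norm_num : 1 ≤ 2) hk
  rw [stirlingSeq_two'] at h
  have hk0 : (0:ℝ) < k := by exact_mod_cast lt_of_lt_of_le (by norm_num) hk
  have hpos : 0 < Real.sqrt (2 * (k:ℝ)) * ((k : ℝ) / Real.exp 1) ^ k := by positivity
  have heq : (k ! : ℝ) = stirlingSeq k * (Real.sqrt (2 * k) * ((k : ℝ) / Real.exp 1) ^ k) := by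
    rw [stirlingSeq]; field_simp
  rw [heq]
  exact mul_le_mul_of_nonneg_right h hpos.le

lemma num_ineq : Real.exp 1 ^ 4 / 16 ≤ 2 * Real.sqrt π := by
  have he : Real.exp 1 < 2.7182818286 := Real.exp_one_lt_d9
  have he0 : (0:ℝ) < Real.exp 1 := Real.exp_pos 1
  have h1 : Real.exp 1 ^ 4 ≤ 2.72 ^ 4 := by
    apply pow_le_pow_left₀ he0.le (by linarith) 4
  have h2 : (1.77:ℝ) ≤ Real.sqrt π := by
    rw [Real.le_sqrt (by norm_num) Real.pi_nonneg]
    nlinarith [Real.pi_gt_d6]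
  nlinarith

lemma core' (k m : ℕ) (hk : 2 ≤ k) (hm : 2 ≤ m) :
    (1:ℝ) ≤ Real.sqrt (2 * (k + m)) * ((k + m).choose k : ℝ) *
      ((k : ℝ) / (k + m)) ^ k * ((m : ℝ) / (k + m)) ^ m := by
  have hK : (0:ℝ) < k := by exact_mod_cast lt_of_lt_of_le two_pos hk
  have hM : (0:ℝ) < m := by exact_mod_cast lt_of_lt_of_le two_pos hm
  have hN : (0:ℝ) < (k:ℝ) + m := by linarith
  have he : (0:ℝ) < Real.exp 1 := Real.exp_pos 1
  have hfk : (0:ℝ) < k ! := by exact_mod_cast k.factorial_pos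
  have hfm : (0:ℝ) < m ! := by exact_mod_cast m.factorial_pos
  -- factorial bounds
  have h1 := fact_ge (n := k + m) (by omega)
  have h2 := fact_le hk
  have h3 := fact_le hm
  have hcast : ((k + m : ℕ) : ℝ) = (k : ℝ) + m := by push_cast; ring
  rw [hcast] at h1
  -- sqrt product bound
  have hsq : Real.sqrt (2 * k) * Real.sqrt (2 * m) ≤ (k:ℝ) + m := by
    rw [← Real.sqrt_mul (by positivity)]
    calc Real.sqrt (2 * (k:ℝ) * (2 * m)) ≤ Real.sqrt (((k:ℝ) + m) ^ 2) := by
          apply Real.sqrt_le_sqrt; nlinarith [sq_nonneg ((k:ℝ) - m)]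
      _ = (k:ℝ) + m := Real.sqrt_sq hN.le
  -- the key product inequality
  have star : (k ! : ℝ) * m ! * ((k:ℝ) + m) ^ (k + m)
      ≤ Real.sqrt (2 * ((k:ℝ) + m)) * ((k + m)! : ℝ) * (k:ℝ) ^ k * (m:ℝ) ^ m := by
    have lhs_le : (k ! : ℝ) * m !
        ≤ (Real.exp 1 ^ 4 / 16) * (Real.sqrt (2 * k) * Real.sqrt (2 * m)) *
           (((k:ℝ) / Real.exp 1) ^ k * ((m:ℝ) / Real.exp 1) ^ m) := by
      calc (k ! : ℝ) * m !
          ≤ ((Real.exp 1 ^ 2 / 4) * (Real.sqrt (2 * k) * ((k : ℝ) / Real.exp 1) ^ k)) *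
            ((Real.exp 1 ^ 2 / 4) * (Real.sqrt (2 * m) * ((m : ℝ) / Real.exp 1) ^ m)) :=
            mul_le_mul h2 h3 hfm.le (by positivity)
        _ = (Real.exp 1 ^ 4 / 16) * (Real.sqrt (2 * k) * Real.sqrt (2 * m)) *
           (((k:ℝ) / Real.exp 1) ^ k * ((m:ℝ) / Real.exp 1) ^ m) := by ring
    have lhs_le2 : (k ! : ℝ) * m !
        ≤ 2 * Real.sqrt π * ((k:ℝ) + m) *
           (((k:ℝ) / Real.exp 1) ^ k * ((m:ℝ) / Real.exp 1) ^ m) := by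
      calc (k ! : ℝ) * m ! ≤ _ := lhs_le
        _ ≤ (Real.exp 1 ^ 4 / 16) * ((k:ℝ) + m) *
           (((k:ℝ) / Real.exp 1) ^ k * ((m:ℝ) / Real.exp 1) ^ m) := by
            apply mul_le_mul_of_nonneg_right _ (by positivity)
            exact mul_le_mul_of_nonneg_left hsq (by positivity)
        _ ≤ 2 * Real.sqrt π * ((k:ℝ) + m) *
           (((k:ℝ) / Real.exp 1) ^ k * ((m:ℝ) / Real.exp 1) ^ m) := by
            apply mul_le_mul_of_nonneg_right _ (by positivity)
            exact mul_le_mul_of_nonneg_right num_ineq hN.le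
    have rhs_ge : Real.sqrt (2 * ((k:ℝ) + m)) *
          (Real.sqrt π * (Real.sqrt (2 * ((k:ℝ) + m)) * (((k:ℝ) + m) / Real.exp 1) ^ (k + m))) *
          (k:ℝ) ^ k * (m:ℝ) ^ m
        ≤ Real.sqrt (2 * ((k:ℝ) + m)) * ((k + m)! : ℝ) * (k:ℝ) ^ k * (m:ℝ) ^ m := by
      have := h1
      gcongr
    have sq2n : Real.sqrt (2 * ((k:ℝ) + m)) * Real.sqrt (2 * ((k:ℝ) + m)) = 2 * ((k:ℝ) + m) :=
      Real.mul_self_sqrt (by positivity)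
    have epow : ((k:ℝ) / Real.exp 1) ^ k * ((m:ℝ) / Real.exp 1) ^ m * ((k:ℝ) + m) ^ (k + m)
        = (((k:ℝ) + m) / Real.exp 1) ^ (k + m) * (k:ℝ) ^ k * (m:ℝ) ^ m := by
      rw [div_pow, div_pow, div_pow, pow_add (Real.exp 1)]
      field_simp
    have key_eq : (k ! : ℝ) * m ! * ((k:ℝ) + m) ^ (k + m)
        ≤ Real.sqrt (2 * ((k:ℝ) + m)) *
          (Real.sqrt π * (Real.sqrt (2 * ((k:ℝ) + m)) * (((k:ℝ) + m) / Real.exp 1) ^ (k + m))) *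
          (k:ℝ) ^ k * (m:ℝ) ^ m := by
      have hmul := mul_le_mul_of_nonneg_right lhs_le2 (le_of_lt (by positivity :
        (0:ℝ) < ((k:ℝ) + m) ^ (k + m)))
      calc (k ! : ℝ) * m ! * ((k:ℝ) + m) ^ (k + m) ≤ _ := hmul
        _ = (2 * ((k:ℝ) + m)) * Real.sqrt π *
              (((k:ℝ) / Real.exp 1) ^ k * ((m:ℝ) / Real.exp 1) ^ m * ((k:ℝ) + m) ^ (k + m)) := by
            ring
        _ = (Real.sqrt (2 * ((k:ℝ) + m)) * Real.sqrt (2 * ((k:ℝ) + m))) * Real.sqrt π *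
              ((((k:ℝ) + m) / Real.exp 1) ^ (k + m) * (k:ℝ) ^ k * (m:ℝ) ^ m) := by
            rw [sq2n, epow]
        _ = Real.sqrt (2 * ((k:ℝ) + m)) *
          (Real.sqrt π * (Real.sqrt (2 * ((k:ℝ) + m)) * (((k:ℝ) + m) / Real.exp 1) ^ (k + m))) *
          (k:ℝ) ^ k * (m:ℝ) ^ m := by
            ring
    exact key_eq.trans rhs_ge
  -- convert to the goal
  have hC : ((k + m).choose k : ℝ) = ((k + m)! : ℝ) / (k ! * m !) := by
    have hmm : k + m - k = m := by omega
    rw [Nat.cast_choose ℝ (Nat.le_add_right k m), hmm]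
  have expand : Real.sqrt (2 * ((k:ℝ) + m)) * ((k + m).choose k : ℝ) *
      ((k : ℝ) / ((k:ℝ) + m)) ^ k * ((m : ℝ) / ((k:ℝ) + m)) ^ m
      = (Real.sqrt (2 * ((k:ℝ) + m)) * ((k + m)! : ℝ) * (k:ℝ) ^ k * (m:ℝ) ^ m) /
        ((k ! : ℝ) * m ! * ((k:ℝ) + m) ^ (k + m)) := by
    rw [hC, div_pow, div_pow, pow_add ((k:ℝ) + m)]
    field_simp
  have goal2 : (1:ℝ) ≤ Real.sqrt (2 * ((k:ℝ) + m)) * ((k + m).choose k : ℝ) *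
      ((k : ℝ) / ((k:ℝ) + m)) ^ k * ((m : ℝ) / ((k:ℝ) + m)) ^ m := by
    rw [expand, le_div_iff₀ (by positivity), one_mul]
    exact star
  convert goal2 using 3 <;> push_cast <;> ring

lemma edge {m : ℕ} (hm : 1 ≤ m) :
    (1:ℝ) ≤ Real.sqrt (2 * ((m:ℝ) + 1)) * ((m : ℝ) / (m + 1)) ^ m := by
  have hm0 : (0:ℝ) < m := by exact_mod_cast hm
  have hgeo : ((1:ℝ) + 1 / m) ^ m ≤ Real.exp 1 := by
    calc ((1:ℝ) + 1 / m) ^ m ≤ Real.exp (1 / m) ^ m := by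
          apply pow_le_pow_left₀ (by positivity)
          have := Real.add_one_le_exp (1 / (m:ℝ))
          linarith
      _ = Real.exp ((m:ℝ) * (1 / m)) := by rw [← Real.exp_nat_mul]
      _ = Real.exp 1 := by rw [mul_one_div, div_self hm0.ne']
  have hinv : ((m:ℝ) / (m + 1)) ^ m * ((1:ℝ) + 1 / m) ^ m = 1 := by
    rw [← mul_pow]
    have : (m:ℝ) / (m + 1) * (1 + 1 / m) = 1 := by field_simp
    rw [this, one_pow]
  have key : ((1:ℝ) + 1 / m) ^ m ≤ Real.sqrt (2 * ((m:ℝ) + 1)) := by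
    rcases Nat.lt_or_ge m 3 with h3 | h3
    · interval_cases m
      · norm_num
      · rw [Real.le_sqrt (by positivity) (by norm_num)]
        norm_num
    · calc ((1:ℝ) + 1 / m) ^ m ≤ Real.exp 1 := hgeo
        _ ≤ Real.sqrt 8 := by
            rw [Real.le_sqrt (Real.exp_pos 1).le (by norm_num)]
            nlinarith [Real.exp_one_lt_d9, Real.exp_pos 1]
        _ ≤ Real.sqrt (2 * ((m:ℝ) + 1)) := by
            apply Real.sqrt_le_sqrt
            have : (3:ℝ) ≤ m := by exact_mod_cast h3
            linarith
  calc (1:ℝ) = ((m:ℝ) / (m + 1)) ^ m * ((1:ℝ) + 1 / m) ^ m := hinv.symm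
    _ ≤ ((m:ℝ) / (m + 1)) ^ m * Real.sqrt (2 * ((m:ℝ) + 1)) :=
        mul_le_mul_of_nonneg_left key (by positivity)
    _ = Real.sqrt (2 * ((m:ℝ) + 1)) * ((m : ℝ) / (m + 1)) ^ m := by ring

lemma keyS {n k : ℕ} (h1 : 1 ≤ k) (h2 : k < n) :
    (1:ℝ) ≤ Real.sqrt (2 * n) * (n.choose k : ℝ) *
      ((k : ℝ) / n) ^ k * (((n:ℝ) - k) / n) ^ (n - k) := by
  obtain ⟨m, rfl⟩ : ∃ m, n = k + m := ⟨n - k, by omega⟩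
  have hm1 : 1 ≤ m := by omega
  have hexp : k + m - k = m := by omega
  have hsub : ((k + m :ℕ):ℝ) - k = m := by push_cast; ring
  rw [hexp, hsub]
  rcases Nat.lt_or_ge m 2 with hm2 | hm2
  · -- m = 1
    have : m = 1 := by omega
    subst this
    have h := edge h1 (m := k)
    calc (1:ℝ) ≤ Real.sqrt (2 * ((k:ℝ) + 1)) * ((k : ℝ) / (k + 1)) ^ k := h
      _ = Real.sqrt (2 * ((k + 1 :ℕ):ℝ)) * (((k + 1).choose k : ℕ) : ℝ) *
          ((k : ℝ) / ((k + 1:ℕ):ℝ)) ^ k * ((1:ℝ) / ((k + 1:ℕ):ℝ)) ^ 1 := by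
        rw [Nat.choose_succ_self_right]
        push_cast
        have : (0:ℝ) < (k:ℝ) + 1 := by positivity
        field_simp
        try ring
      _ = Real.sqrt (2 * ((k + 1 :ℕ):ℝ)) * (((k + 1).choose k : ℕ) : ℝ) *
          ((k : ℝ) / ((k + 1:ℕ):ℝ)) ^ k * (((1:ℕ) : ℝ) / ((k + 1:ℕ):ℝ)) ^ 1 := by
        norm_num
  rcases Nat.lt_or_ge k 2 with hk2 | hk2
  · -- k = 1
    have : k = 1 := by omega
    subst this
    have h := edge (le_trans one_le_two hm2) (m := m)
    calc (1:ℝ) ≤ Real.sqrt (2 * ((m:ℝ) + 1)) * ((m : ℝ) / (m + 1)) ^ m := h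
      _ = Real.sqrt (2 * ((1 + m :ℕ):ℝ)) * (((1 + m).choose 1 : ℕ) : ℝ) *
          (((1:ℕ) : ℝ) / ((1 + m:ℕ):ℝ)) ^ 1 * ((m : ℝ) / ((1 + m:ℕ):ℝ)) ^ m := by
        rw [Nat.choose_one_right]
        push_cast
        have : (0:ℝ) < (m:ℝ) + 1 := by positivity
        rw [show (1:ℝ) + m = m + 1 by ring]
        field_simp
        try ring
  · -- central case
    have h := core' k m hk2 hm2
    convert h using 3 <;> push_cast <;> ring

theorem stmt11 (n k : ℕ) (hn : 0 < n) (hk : k ≤ n) (p : ℝ) (hp0 : 0 < p) (hp1 : p < 1)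
    (hkp : (k : ℝ) / n ≤ p) :
    (1 / Real.sqrt (2 * n)) * Real.exp (-(n : ℝ) *
        (((k : ℝ) / n) * Real.log (((k : ℝ) / n) / p) +
          (1 - (k : ℝ) / n) * Real.log ((1 - (k : ℝ) / n) / (1 - p))))
      ≤ ∑ j ∈ Finset.range (k + 1), (n.choose j : ℝ) * p ^ j * (1 - p) ^ (n - j) := by
  have hn0 : (0:ℝ) < n := by exact_mod_cast hn
  have h1p : (0:ℝ) < 1 - p := by linarith
  have hsqrt : (1:ℝ) ≤ Real.sqrt (2 * n) := by
    rw [show (1:ℝ) = Real.sqrt 1 from (Real.sqrt_one).symm]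
    apply Real.sqrt_le_sqrt
    have : (1:ℝ) ≤ n := by exact_mod_cast hn
    linarith
  have hsqrt0 : (0:ℝ) < Real.sqrt (2 * n) := lt_of_lt_of_le one_pos hsqrt
  have hterm_nonneg : ∀ i ∈ Finset.range (k + 1),
      (0:ℝ) ≤ (n.choose i : ℝ) * p ^ i * (1 - p) ^ (n - i) := by
    intro i _
    have : (0:ℝ) ≤ (n.choose i : ℝ) := by positivity
    exact mul_nonneg (mul_nonneg this (pow_nonneg hp0.le _)) (pow_nonneg h1p.le _)
  have hsingle : (n.choose k : ℝ) * p ^ k * (1 - p) ^ (n - k)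
      ≤ ∑ j ∈ Finset.range (k + 1), (n.choose j : ℝ) * p ^ j * (1 - p) ^ (n - j) :=
    Finset.single_le_sum hterm_nonneg (Finset.self_mem_range_succ k)
  rcases Nat.eq_zero_or_pos k with hk0 | hk1
  · -- k = 0
    subst hk0
    have hq : (0:ℝ) / n = 0 := by simp
    simp only [Nat.cast_zero, hq, zero_mul, sub_zero, one_mul, zero_add]
    have hlog : Real.log (1 / (1 - p)) = - Real.log (1 - p) := by
      rw [one_div, Real.log_inv]
    rw [hlog]
    have hexp : Real.exp (-(n:ℝ) * -Real.log (1 - p)) = (1 - p) ^ n := by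
      rw [neg_mul_neg, Real.exp_nat_mul, Real.exp_log h1p]
    rw [hexp]
    calc (1 / Real.sqrt (2 * n)) * (1 - p) ^ n ≤ 1 * (1 - p) ^ n := by
          apply mul_le_mul_of_nonneg_right _ (pow_nonneg h1p.le _)
          rw [div_le_one hsqrt0]
          exact hsqrt
      _ = (n.choose 0 : ℝ) * p ^ 0 * (1 - p) ^ (n - 0) := by simp
      _ ≤ _ := hsingle
  · -- 1 ≤ k
    have hkn : k < n := by
      rcases Nat.lt_or_ge k n with h | h
      · exact h
      · exfalso
        have : k = n := le_antisymm hk h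
        subst this
        rw [div_self hn0.ne'] at hkp
        linarith
    set q : ℝ := (k:ℝ) / n with hqdef
    have hq0 : 0 < q := by
      apply div_pos _ hn0
      exact_mod_cast hk1
    have hq1 : q < 1 := by
      rw [hqdef, div_lt_one hn0]
      exact_mod_cast hkn
    have h1q : 0 < 1 - q := by linarith
    have hnq : (n:ℝ) * q = k := by
      rw [hqdef]; field_simp
    have hnq' : (n:ℝ) * (1 - q) = ((n - k : ℕ) : ℝ) := by
      rw [Nat.cast_sub hkn.le, hqdef]; field_simp
    have e1 : -(n:ℝ) * (q * Real.log (q / p) + (1 - q) * Real.log ((1 - q) / (1 - p)))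
        = (k:ℝ) * Real.log (p / q) + ((n - k : ℕ) : ℝ) * Real.log ((1 - p) / (1 - q)) := by
      rw [Real.log_div hq0.ne' hp0.ne', Real.log_div h1q.ne' h1p.ne',
        Real.log_div hp0.ne' hq0.ne', Real.log_div h1p.ne' h1q.ne']
      linear_combination (Real.log p - Real.log q) * hnq +
        (Real.log (1 - p) - Real.log (1 - q)) * hnq'
    have e2 : Real.exp (-(n:ℝ) * (q * Real.log (q / p) + (1 - q) * Real.log ((1 - q) / (1 - p))))
        = (p / q) ^ k * ((1 - p) / (1 - q)) ^ (n - k) := by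
      rw [e1, Real.exp_add, Real.exp_nat_mul, Real.exp_nat_mul,
        Real.exp_log (div_pos hp0 hq0), Real.exp_log (div_pos h1p h1q)]
    rw [e2]
    have hS : (1:ℝ) ≤ Real.sqrt (2 * n) * (n.choose k : ℝ) * q ^ k * (1 - q) ^ (n - k) := by
      have h := keyS hk1 hkn
      have hq' : 1 - q = ((n:ℝ) - k) / n := by rw [hqdef]; field_simp
      rw [hq']
      exact h
    have hC0 : (0:ℝ) < (n.choose k : ℝ) := by
      exact_mod_cast Nat.choose_pos hkn.le
    have expand : (1 / Real.sqrt (2 * n)) * ((p / q) ^ k * ((1 - p) / (1 - q)) ^ (n - k))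
        = (p ^ k * (1 - p) ^ (n - k)) / (Real.sqrt (2 * n) * q ^ k * (1 - q) ^ (n - k)) := by
      rw [div_pow p q, div_pow (1 - p) (1 - q)]
      ring
    rw [expand, div_le_iff₀ (by positivity)]
    calc p ^ k * (1 - p) ^ (n - k)
        = p ^ k * (1 - p) ^ (n - k) * 1 := by ring
      _ ≤ p ^ k * (1 - p) ^ (n - k) *
          (Real.sqrt (2 * n) * (n.choose k : ℝ) * q ^ k * (1 - q) ^ (n - k)) :=
          mul_le_mul_of_nonneg_left hS (by positivity)
      _ = ((n.choose k : ℝ) * p ^ k * (1 - p) ^ (n - k)) *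
          (Real.sqrt (2 * n) * q ^ k * (1 - q) ^ (n - k)) := by ring
      _ ≤ _ := by
          apply mul_le_mul_of_nonneg_right hsingle (by positivity)

end BinomialLowerTail
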